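/- Assume the parameter space N is finite-dimensional and that for each (x,y) ∈ E₁ × E₂ the functions (p,z) ↦ f̃(p,z,x) and (p,w) ↦ g̃(p,w,y) are upper semi-continuous (jointly in their first two variables). Then the solution set of SEP(f,g,C,Q) equals the intersection of the approximate solution sets: S = ⋂_{ε>0} S(ε). -/

import Mathlib

open Filter Metric Topology Set

/-- The solution set of the split equilibrium problem SEP(f,g,C,Q). -/
def SEPSol {E₁ E₂ : Type*} [NormedAddCommGroup E₁] [NormedSpace ℝ E₁]
    [NormedAddCommGroup E₂] [NormedSpace ℝ E₂]
    (C : Set E₁) (Q : Set E₂) (A : E₁ →L[ℝ] E₂)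
    (f : E₁ → E₁ → ℝ) (g : E₂ → E₂ → ℝ) : Set (E₁ × E₂) :=
  {u | u.1 ∈ C ∧ u.2 ∈ Q ∧ u.2 = A u.1 ∧
    (∀ x ∈ C, 0 ≤ f u.1 x) ∧ (∀ y ∈ Q, 0 ≤ g u.2 y)}

/-- The approximate solution set S(ε) of the perturbed split equilibrium problem,
where the perturbation parameter ranges over the closed ball M of radius `r`
centered at `pstar`, intersected with the closed ball of radius `ε` around `pstar`. -/
def approxSol {E₁ E₂ N : Type*} [NormedAddCommGroup E₁] [NormedSpace ℝ E₁]
    [NormedAddCommGroup E₂] [NormedSpace ℝ E₂] [NormedAddCommGroup N] [NormedSpace ℝ N]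
    (C : Set E₁) (Q : Set E₂) (A : E₁ →L[ℝ] E₂) (pstar : N) (r : ℝ)
    (ft : N → E₁ → E₁ → ℝ) (gt : N → E₂ → E₂ → ℝ) (ε : ℝ) : Set (E₁ × E₂) :=
  {u | ∃ p : N, ‖p - pstar‖ ≤ r ∧ ‖p - pstar‖ ≤ ε ∧
    infDist u.1 C ≤ ε ∧ infDist u.2 Q ≤ ε ∧ ‖u.2 - A u.1‖ ≤ ε ∧
    (∀ x ∈ C, -ε ≤ ft p u.1 x) ∧ (∀ y ∈ Q, -ε ≤ gt p u.2 y)}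

/-- `u` is a generalized approximating sequence corresponding to the parameter
sequence `p` (which lies in the ball M of radius `r` around `pstar` and converges
to `pstar`) for the split equilibrium problem. -/
def GenApproxSeq {E₁ E₂ N : Type*} [NormedAddCommGroup E₁] [NormedSpace ℝ E₁]
    [NormedAddCommGroup E₂] [NormedSpace ℝ E₂] [NormedAddCommGroup N] [NormedSpace ℝ N]
    (C : Set E₁) (Q : Set E₂) (A : E₁ →L[ℝ] E₂) (pstar : N) (r : ℝ)
    (ft : N → E₁ → E₁ → ℝ) (gt : N → E₂ → E₂ → ℝ)
    (p : ℕ → N) (u : ℕ → E₁ × E₂) : Prop :=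
  (∀ n, ‖p n - pstar‖ ≤ r) ∧ Tendsto p atTop (nhds pstar) ∧
  ∃ ε : ℕ → ℝ, (∀ n, 0 < ε n) ∧ Tendsto ε atTop (nhds 0) ∧
    ∀ n, infDist (u n).1 C ≤ ε n ∧ infDist (u n).2 Q ≤ ε n ∧
      ‖(u n).2 - A (u n).1‖ ≤ ε n ∧
      (∀ x ∈ C, -(ε n) ≤ ft (p n) (u n).1 x) ∧
      (∀ y ∈ Q, -(ε n) ≤ gt (p n) (u n).2 y)

/-- SEP(f,g,C,Q) is Levitin–Polyak well-posed by perturbations: the solution set is a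
singleton and every generalized approximating sequence converges to the unique solution. -/
def LPWellPosedPerturb {E₁ E₂ N : Type*} [NormedAddCommGroup E₁] [NormedSpace ℝ E₁]
    [NormedAddCommGroup E₂] [NormedSpace ℝ E₂] [NormedAddCommGroup N] [NormedSpace ℝ N]
    (C : Set E₁) (Q : Set E₂) (A : E₁ →L[ℝ] E₂) (pstar : N) (r : ℝ)
    (ft : N → E₁ → E₁ → ℝ) (gt : N → E₂ → E₂ → ℝ) : Prop :=
  ∃ ustar : E₁ × E₂, SEPSol C Q A (ft pstar) (gt pstar) = {ustar} ∧
    ∀ (p : ℕ → N) (u : ℕ → E₁ × E₂), GenApproxSeq C Q A pstar r ft gt p u →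
      Tendsto u atTop (nhds ustar)

/-- SEP(f,g,C,Q) is Levitin–Polyak well-posed by perturbations in the generalized sense:
the solution set is nonempty and every generalized approximating sequence has a
subsequence converging to some solution. -/
def GenLPWellPosedPerturb {E₁ E₂ N : Type*} [NormedAddCommGroup E₁] [NormedSpace ℝ E₁]
    [NormedAddCommGroup E₂] [NormedSpace ℝ E₂] [NormedAddCommGroup N] [NormedSpace ℝ N]
    (C : Set E₁) (Q : Set E₂) (A : E₁ →L[ℝ] E₂) (pstar : N) (r : ℝ)
    (ft : N → E₁ → E₁ → ℝ) (gt : N → E₂ → E₂ → ℝ) : Prop :=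
  (SEPSol C Q A (ft pstar) (gt pstar)).Nonempty ∧
    ∀ (p : ℕ → N) (u : ℕ → E₁ × E₂), GenApproxSeq C Q A pstar r ft gt p u →
      ∃ ustar ∈ SEPSol C Q A (ft pstar) (gt pstar), ∃ φ : ℕ → ℕ, StrictMono φ ∧
        Tendsto (u ∘ φ) atTop (nhds ustar)

/-- The Kuratowski measure of noncompactness: the infimum of all `ε > 0` such that the
set can be covered by finitely many sets, each of diameter `< ε`. -/
noncomputable def kuratowskiMNC {X : Type*} [PseudoEMetricSpace X] (s : Set X) : ENNReal :=
  sInf {ε : ENNReal | 0 < ε ∧ ∃ t : Finset (Set X), (s ⊆ ⋃ a ∈ t, (a : Set X)) ∧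
    ∀ a ∈ t, EMetric.diam a < ε}

/-- If the parameter space is finite-dimensional and the perturbed bifunctions are upper
semicontinuous in their first two variables, then the solution set equals the
intersection of all the approximate solution sets: S = ⋂_{ε>0} S(ε). -/
theorem sep_sol_eq_iInter_approxSol
    {E₁ E₂ N : Type*} [NormedAddCommGroup E₁] [NormedSpace ℝ E₁] [CompleteSpace E₁]
    [NormedAddCommGroup E₂] [NormedSpace ℝ E₂] [CompleteSpace E₂]
    [NormedAddCommGroup N] [NormedSpace ℝ N]
    (C : Set E₁) (Q : Set E₂) (hCne : C.Nonempty) (hCcl : IsClosed C) (hCcv : Convex ℝ C)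
    (hQne : Q.Nonempty) (hQcl : IsClosed Q) (hQcv : Convex ℝ Q)
    (A : E₁ →L[ℝ] E₂) (pstar : N) (r : ℝ) (hr : 0 < r)
    (ftil : N → E₁ → E₁ → ℝ) (gtil : N → E₂ → E₂ → ℝ)
    [FiniteDimensional ℝ N]
    (hfusc : ∀ x : E₁, UpperSemicontinuous fun q : N × E₁ => ftil q.1 q.2 x)
    (hgusc : ∀ y : E₂, UpperSemicontinuous fun q : N × E₂ => gtil q.1 q.2 y) :
    SEPSol C Q A (ftil pstar) (gtil pstar) =
      ⋂ ε > (0 : ℝ), approxSol C Q A pstar r ftil gtil ε := by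
  ext u
  simp only [Set.mem_iInter, SEPSol, approxSol, Set.mem_setOf_eq]
  constructor
  · rintro ⟨h1, h2, h3, h4, h5⟩ ε hε
    refine ⟨pstar, by simp [hr.le], by simp [hε.le], ?_, ?_, ?_, ?_, ?_⟩
    · rw [infDist_zero_of_mem h1]; exact hε.le
    · rw [infDist_zero_of_mem h2]; exact hε.le
    · rw [h3]; simp [hε.le]
    · exact fun x hx => le_trans (by linarith) (h4 x hx)
    · exact fun y hy => le_trans (by linarith) (h5 y hy)
  · intro h
    set εs : ℕ → ℝ := fun n => (n + 1 : ℝ)⁻¹ with hεs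
    have hεpos : ∀ n, 0 < εs n := fun n => by positivity
    have hεlim : Tendsto εs atTop (nhds 0) := by simpa [hεs, one_div] using tendsto_one_div_add_atTop_nhds_zero_nat (𝕜 := ℝ)
    choose p hpr hpε hdC hdQ hA hf hg using fun n => h (εs n) (hεpos n)
    have hplim : Tendsto p atTop (nhds pstar) := by
      rw [tendsto_iff_norm_sub_tendsto_zero]
      exact squeeze_zero (fun n => norm_nonneg _) hpε hεlim
    have hle0 : ∀ c : ℝ, (∀ n, c ≤ εs n) → c ≤ 0 := fun c hc =>
      ge_of_tendsto' hεlim hc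
    have h1 : u.1 ∈ C := by
      rw [← hCcl.closure_eq, mem_closure_iff_infDist_zero hCne]
      exact le_antisymm (hle0 _ hdC) infDist_nonneg
    have h2 : u.2 ∈ Q := by
      rw [← hQcl.closure_eq, mem_closure_iff_infDist_zero hQne]
      exact le_antisymm (hle0 _ hdQ) infDist_nonneg
    have h3 : u.2 = A u.1 := by
      have := le_antisymm (hle0 _ hA) (norm_nonneg _)
      rwa [norm_eq_zero, sub_eq_zero] at this
    refine ⟨h1, h2, h3, ?_, ?_⟩
    · intro x hx
      by_contra hneg
      push_neg at hneg
      have husc := hfusc x (pstar, u.1) (ftil pstar u.1 x / 2) (by linarith)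
      have hq : Tendsto (fun n => ((p n, u.1) : N × E₁)) atTop (nhds (pstar, u.1)) :=
        hplim.prodMk_nhds tendsto_const_nhds
      have h5 := hq.eventually husc
      have h6 : ∀ᶠ n in atTop, εs n < -(ftil pstar u.1 x / 2) :=
        hεlim.eventually (eventually_lt_nhds (by linarith))
      obtain ⟨n, hn1, hn2⟩ := (h5.and h6).exists
      have := hf n x hx
      simp only at hn1
      linarith
    · intro y hy
      by_contra hneg
      push_neg at hneg
      have husc := hgusc y (pstar, u.2) (gtil pstar u.2 y / 2) (by linarith)
      have hq : Tendsto (fun n => ((p n, u.2) : N × E₂)) atTop (nhds (pstar, u.2)) :=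
        hplim.prodMk_nhds tendsto_const_nhds
      have h5 := hq.eventually husc
      have h6 : ∀ᶠ n in atTop, εs n < -(gtil pstar u.2 y / 2) :=
        hεlim.eventually (eventually_lt_nhds (by linarith))
      obtain ⟨n, hn1, hn2⟩ := (h5.and h6).exists
      have := hg n y hy
      simp only at hn1
      linarith
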